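/- With α₊ = ∫₁^∞ dx/√(x³−1) and α₋ = ∫_{−1}^∞ dx/√(x³+1), one has α₋ = √3 · α₊. -/

import Mathlib

open MeasureTheory Set

noncomputable def F (x : ℝ) : ℝ := x + 4 / x ^ 2

lemma F_hasDerivAt {x : ℝ} (hx : x ≠ 0) : HasDerivAt F (1 - 8 / x ^ 3) x := by
  have h2 : x ^ 2 ≠ 0 := pow_ne_zero 2 hx
  have hd : HasDerivAt (fun y : ℝ => (4 : ℝ) / y ^ 2)
      ((0 * x ^ 2 - 4 * (2 * x ^ 1)) / (x ^ 2) ^ 2) x :=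
    (hasDerivAt_const x (4 : ℝ)).div (hasDerivAt_pow 2 x) h2
  have := (hasDerivAt_id x).add hd
  refine HasDerivAt.congr_deriv this ?_
  field_simp
  ring

lemma F_contOn {s : Set ℝ} (h0 : ∀ x ∈ s, x ≠ 0) : ContinuousOn F s :=
  fun x hx => ((F_hasDerivAt (h0 x hx)).continuousAt).continuousWithinAt

lemma F_gt {x : ℝ} (hx1 : -1 < x) (hx0 : x ≠ 0) (hx2 : x ≠ 2) : 3 < F x := by
  have key : F x - 3 = (x + 1) * (x - 2) ^ 2 / x ^ 2 := by
    unfold F; field_simp; ring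
  have h1 : (0:ℝ) < x + 1 := by linarith
  have h2 : (0:ℝ) < (x - 2) ^ 2 := by
    rcases (sub_ne_zero.mpr hx2).lt_or_gt with h | h
    · nlinarith
    · nlinarith
  have h3 : (0:ℝ) < x ^ 2 := by positivity
  nlinarith [div_pos (mul_pos h1 h2) h3]

lemma mono1 : StrictMonoOn F (Ioo (-1 : ℝ) 0) := by
  apply strictMonoOn_of_deriv_pos (convex_Ioo _ _)
    (F_contOn fun x hx => ne_of_lt hx.2)
  intro x hx
  rw [interior_Ioo] at hx
  rw [(F_hasDerivAt (ne_of_lt hx.2)).deriv]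
  have hx3 : x ^ 3 < 0 := Odd.pow_neg (by decide) hx.2
  have : (8:ℝ) / x ^ 3 < 0 := div_neg_of_pos_of_neg (by norm_num) hx3
  linarith

lemma mono2 : StrictAntiOn F (Ioo (0 : ℝ) 2) := by
  apply strictAntiOn_of_deriv_neg (convex_Ioo _ _)
    (F_contOn fun x hx => ne_of_gt hx.1)
  intro x hx
  rw [interior_Ioo] at hx
  obtain ⟨ha, hb⟩ := hx
  rw [(F_hasDerivAt (ne_of_gt ha)).deriv]
  have hx3 : 0 < x ^ 3 := by positivity
  have h8 : x ^ 3 < 8 := by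
    have := pow_lt_pow_left₀ hb ha.le (by norm_num : 3 ≠ 0)
    norm_num at this; linarith
  have : (1:ℝ) < 8 / x ^ 3 := (one_lt_div hx3).mpr h8
  linarith

lemma mono3 : StrictMonoOn F (Ioi (2 : ℝ)) := by
  apply strictMonoOn_of_deriv_pos (convex_Ioi _)
    (F_contOn fun x hx => by have : (2:ℝ) < x := hx; positivity)
  intro x hx
  rw [interior_Ioi] at hx
  have h2 : (2:ℝ) < x := hx
  rw [(F_hasDerivAt (by positivity)).deriv]
  have hx3 : 0 < x ^ 3 := by positivity
  have h8 : (8:ℝ) < x ^ 3 := by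
    have := pow_lt_pow_left₀ h2 (by norm_num : (0:ℝ) ≤ 2) (by norm_num : 3 ≠ 0)
    norm_num at this; linarith
  have : (8:ℝ) / x ^ 3 < 1 := (div_lt_one hx3).mpr h8

  linarith

lemma img1 : F '' Ioo (-1 : ℝ) 0 = Ioi 3 := by
  apply Subset.antisymm
  · rintro _ ⟨x, hx, rfl⟩
    exact F_gt hx.1 (ne_of_lt hx.2) (by linarith [hx.2])
  · intro y hy
    have hy3 : (3:ℝ) < y := hy
    set s := Real.sqrt (y + 1) with hs
    have hspos : (0:ℝ) < s := Real.sqrt_pos.mpr (by linarith)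
    have hs2 : s ^ 2 = y + 1 := Real.sq_sqrt (by linarith)
    have hs4 : (2:ℝ) < s := by
      rw [hs]
      rw [show (2:ℝ) = Real.sqrt 4 by rw [show (4:ℝ) = 2^2 by norm_num, Real.sqrt_sq (by norm_num)]]
      exact Real.sqrt_lt_sqrt (by norm_num) (by linarith)
    set b := -(2 / s) with hb
    have hbneg : b < 0 := by
      have : (0:ℝ) < 2 / s := by positivity
      simp [hb]; linarith
    have hbgt : -1 < b := by
      have : 2 / s < 1 := (div_lt_one hspos).mpr (by linarith)
      simp only [hb]; linarith
    have hb2 : b ^ 2 = 4 / (y + 1) := by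
      have h1 : b ^ 2 = 4 / s ^ 2 := by rw [hb]; rw [neg_sq, div_pow]; norm_num
      rw [h1, hs2]
    have hFb : F b = b + (y + 1) := by
      unfold F
      rw [hb2]
      congr 1
      field_simp
    have hFby : y ≤ F b := by rw [hFb]; linarith
    have hFm1 : F (-1) = 3 := by unfold F; norm_num
    have hsub : y ∈ Icc (F (-1)) (F b) := ⟨by rw [hFm1]; linarith, hFby⟩
    have hcont : ContinuousOn F (Icc (-1) b) :=
      F_contOn fun x hx => ne_of_lt (lt_of_le_of_lt hx.2 hbneg)
    obtain ⟨c, hc, hcy⟩ := intermediate_value_Icc (by linarith : (-1:ℝ) ≤ b) hcont hsub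
    refine ⟨c, ⟨?_, lt_of_le_of_lt hc.2 hbneg⟩, hcy⟩
    rcases eq_or_lt_of_le hc.1 with h | h
    · exfalso; rw [← h, hFm1] at hcy; linarith
    · exact h

lemma img2 : F '' Ioo (0 : ℝ) 2 = Ioi 3 := by
  apply Subset.antisymm
  · rintro _ ⟨x, hx, rfl⟩
    exact F_gt (by linarith [hx.1]) (ne_of_gt hx.1) (ne_of_lt hx.2)
  · intro y hy
    have hy3 : (3:ℝ) < y := hy
    set s := Real.sqrt y with hs
    have hspos : (0:ℝ) < s := Real.sqrt_pos.mpr (by linarith)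
    have hs2 : s ^ 2 = y := Real.sq_sqrt (by linarith)
    have hs1 : (1:ℝ) < s := by
      rw [hs, show (1:ℝ) = Real.sqrt 1 by simp]
      exact Real.sqrt_lt_sqrt (by norm_num) (by linarith)
    set a := 2 / s with ha
    have hapos : (0:ℝ) < a := by positivity
    have ha2 : a < 2 := by
      rw [ha]; rw [div_lt_iff₀ hspos]; linarith
    have ha4 : 4 / a ^ 2 = y := by
      have h1 : a ^ 2 = 4 / y := by rw [ha, div_pow, hs2]; norm_num
      rw [h1]
      have hy0 : y ≠ 0 := by linarith
      field_simp
    have hFa : F a = a + y := by unfold F; rw [ha4]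
    have hF2 : F 2 = 3 := by unfold F; norm_num
    have hsub : y ∈ Icc (F 2) (F a) := ⟨by rw [hF2]; linarith, by rw [hFa]; linarith⟩
    have hcont : ContinuousOn F (Icc a 2) :=
      F_contOn fun x hx => ne_of_gt (lt_of_lt_of_le hapos hx.1)
    obtain ⟨c, hc, hcy⟩ := intermediate_value_Icc' (le_of_lt ha2) hcont hsub
    refine ⟨c, ⟨lt_of_lt_of_le hapos hc.1, ?_⟩, hcy⟩
    rcases eq_or_lt_of_le hc.2 with h | h
    · exfalso; rw [h, hF2] at hcy; linarith
    · exact h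

lemma img3 : F '' Ioi (2 : ℝ) = Ioi 3 := by
  apply Subset.antisymm
  · rintro _ ⟨x, hx, rfl⟩
    have : (2:ℝ) < x := hx
    exact F_gt (by linarith) (by positivity) (ne_of_gt this)
  · intro y hy
    have hy3 : (3:ℝ) < y := hy
    have hF2 : F 2 = 3 := by unfold F; norm_num
    have hFy : y ≤ F y := by
      unfold F
      have : (0:ℝ) < 4 / y ^ 2 := by positivity
      linarith
    have hsub : y ∈ Icc (F 2) (F y) := ⟨by rw [hF2]; linarith, hFy⟩
    have hcont : ContinuousOn F (Icc 2 y) :=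
      F_contOn fun x hx => by have := hx.1; positivity
    obtain ⟨c, hc, hcy⟩ := intermediate_value_Icc (by linarith : (2:ℝ) ≤ y) hcont hsub
    refine ⟨c, ?_, hcy⟩
    rcases eq_or_lt_of_le hc.1 with h | h
    · exfalso; rw [← h, hF2] at hcy; linarith
    · exact h

lemma lintegral_image_one_dim {s : Set ℝ} {f : ℝ → ℝ} {f' : ℝ → ℝ}
    (hs : MeasurableSet s) (hf' : ∀ x ∈ s, HasDerivWithinAt f (f' x) s x)
    (hf : InjOn f s) (g : ℝ → ENNReal) :
    ∫⁻ x in f '' s, g x = ∫⁻ x in s, ENNReal.ofReal |f' x| * g (f x) := by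
  simpa only [ContinuousLinearMap.det_toSpanSingleton] using
    lintegral_image_eq_lintegral_abs_det_fderiv_mul volume hs
      (fun x hx => (hf' x hx).hasFDerivWithinAt) hf g

lemma F_key {x : ℝ} (hx0 : x ≠ 0) (hx1 : 0 < x ^ 3 + 1) (hx8 : x ^ 3 ≠ 8) :
    |1 - 8 / x ^ 3| * (1 / Real.sqrt ((F x) ^ 3 - 27)) = 1 / Real.sqrt (x ^ 3 + 1) := by
  have h3 : x ^ 3 ≠ 0 := pow_ne_zero 3 hx0
  have hF : (F x) ^ 3 - 27 = (x ^ 3 + 1) * ((x ^ 3 - 8) / x ^ 3) ^ 2 := by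
    unfold F; field_simp; ring
  have habs : (1 : ℝ) - 8 / x ^ 3 = (x ^ 3 - 8) / x ^ 3 := by field_simp
  have ha : |(x ^ 3 - 8) / x ^ 3| ≠ 0 :=
    abs_ne_zero.mpr (div_ne_zero (sub_ne_zero.mpr hx8) h3)
  have hs : Real.sqrt (x ^ 3 + 1) ≠ 0 := by positivity
  rw [hF, habs, Real.sqrt_mul hx1.le, Real.sqrt_sq_eq_abs]
  field_simp

lemma branch_eq {s : Set ℝ} (hs : MeasurableSet s)
    (h0 : ∀ x ∈ s, x ≠ 0) (h1 : ∀ x ∈ s, 0 < x ^ 3 + 1) (h8 : ∀ x ∈ s, x ^ 3 ≠ 8)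
    (hinj : InjOn F s) (himg : F '' s = Ioi 3) :
    ∫⁻ x in Ioi (3 : ℝ), ENNReal.ofReal (1 / Real.sqrt (x ^ 3 - 27))
      = ∫⁻ x in s, ENNReal.ofReal (1 / Real.sqrt (x ^ 3 + 1)) := by
  rw [← himg, lintegral_image_one_dim hs
    (fun x hx => (F_hasDerivAt (h0 x hx)).hasDerivWithinAt) hinj]
  refine setLIntegral_congr_fun hs (fun x hx => ?_)
  rw [← ENNReal.ofReal_mul (abs_nonneg _), F_key (h0 x hx) (h1 x hx) (h8 x hx)]

lemma sqrt27 : Real.sqrt 27 = 3 * Real.sqrt 3 := by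
  rw [show (27:ℝ) = 3 ^ 2 * 3 by norm_num, Real.sqrt_mul (by positivity),
    Real.sqrt_sq (by norm_num)]

lemma scale_eq :
    ∫⁻ x in Ioi (3 : ℝ), ENNReal.ofReal (1 / Real.sqrt (x ^ 3 - 27))
      = ENNReal.ofReal (Real.sqrt 3)⁻¹
        * ∫⁻ x in Ioi (1 : ℝ), ENNReal.ofReal (1 / Real.sqrt (x ^ 3 - 1)) := by
  have himg : (fun x : ℝ => 3 * x) '' Ioi 1 = Ioi 3 := by
    ext y
    constructor
    · rintro ⟨x, hx, rfl⟩
      have h1 : (1:ℝ) < x := hx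
      show (3:ℝ) < 3 * x
      linarith
    · intro hy
      have h3 : (3:ℝ) < y := hy
      exact ⟨y / 3, show (1:ℝ) < y / 3 by linarith, by ring⟩
  have hderiv : ∀ x ∈ Ioi (1:ℝ), HasDerivWithinAt (fun x : ℝ => 3 * x) ((fun _ : ℝ => (3:ℝ)) x) (Ioi 1) x := by
    intro x _
    simpa using ((hasDerivAt_id x).const_mul (3:ℝ)).hasDerivWithinAt
  have hinj : InjOn (fun x : ℝ => 3 * x) (Ioi 1) := fun a _ b _ h => by
    dsimp at h; linarith
  rw [← himg, lintegral_image_one_dim measurableSet_Ioi hderiv hinj]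
  rw [← lintegral_const_mul' (ENNReal.ofReal (Real.sqrt 3)⁻¹) _ ENNReal.ofReal_ne_top]
  refine setLIntegral_congr_fun measurableSet_Ioi
    (fun x hx => ?_)
  have h1 : (1:ℝ) < x := hx
  have hpos : (0:ℝ) < x ^ 3 - 1 := by
    have := pow_lt_pow_left₀ h1 (by norm_num : (0:ℝ) ≤ 1) (by norm_num : 3 ≠ 0)
    norm_num at this
    linarith
  have hsx : Real.sqrt (x ^ 3 - 1) ≠ 0 := by positivity
  have hs3 : Real.sqrt 3 ≠ 0 := by positivity
  rw [← ENNReal.ofReal_mul (abs_nonneg _), ← ENNReal.ofReal_mul (by positivity)]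
  congr 1
  have hcube : (3 * x) ^ 3 - 27 = 27 * (x ^ 3 - 1) := by ring
  rw [hcube, Real.sqrt_mul (by norm_num), sqrt27]
  rw [abs_of_nonneg (by norm_num : (0:ℝ) ≤ 3)]
  have h33 : Real.sqrt 3 * Real.sqrt 3 = 3 := Real.mul_self_sqrt (by norm_num)
  field_simp

lemma vol_pair : (volume : Measure ℝ) ({0, 2} : Set ℝ) = 0 := by
  refine measure_union_null (measure_singleton _) (measure_singleton _)

lemma measurable_integrand : Measurable fun x : ℝ => ENNReal.ofReal (1 / Real.sqrt (x ^ 3 + 1)) := by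
  apply ENNReal.measurable_ofReal.comp
  apply Measurable.div measurable_const
  exact Real.continuous_sqrt.measurable.comp ((measurable_id.pow_const 3).add_const 1)

theorem stmt4 :
    (∫ x in Ioi (-1 : ℝ), 1 / Real.sqrt (x ^ 3 + 1))
      = Real.sqrt 3 * ∫ x in Ioi (1 : ℝ), 1 / Real.sqrt (x ^ 3 - 1) := by
  have hm1 : AEStronglyMeasurable (fun x : ℝ => 1 / Real.sqrt (x ^ 3 + 1))
      (volume.restrict (Ioi (-1 : ℝ))) := by
    apply Measurable.aestronglyMeasurable
    apply Measurable.div measurable_const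
    exact Real.continuous_sqrt.measurable.comp ((measurable_id.pow_const 3).add_const 1)
  have hm2 : AEStronglyMeasurable (fun x : ℝ => 1 / Real.sqrt (x ^ 3 - 1))
      (volume.restrict (Ioi (1 : ℝ))) := by
    apply Measurable.aestronglyMeasurable
    apply Measurable.div measurable_const
    exact Real.continuous_sqrt.measurable.comp ((measurable_id.pow_const 3).sub_const 1)
  rw [integral_eq_lintegral_of_nonneg_ae
    (Filter.Eventually.of_forall fun x => by positivity) hm1,
    integral_eq_lintegral_of_nonneg_ae
    (Filter.Eventually.of_forall fun x => by positivity) hm2]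
  -- split the left lintegral
  have hae : Ioi (-1 : ℝ) =ᵐ[volume] ((Ioo (-1 : ℝ) 0 ∪ Ioo 0 2 ∪ Ioi 2 : Set ℝ)) := by
    rw [MeasureTheory.ae_eq_set]
    constructor
    · refine measure_mono_null (fun x hx => ?_) vol_pair
      obtain ⟨hx1, hx2⟩ := hx
      simp only [mem_union, mem_Ioo, mem_Ioi, not_or, not_and, not_lt] at hx2
      obtain ⟨⟨h1, h2⟩, h3⟩ := hx2
      simp only [mem_insert_iff, mem_singleton_iff]
      rcases lt_trichotomy x 0 with h | h | h
      · exact absurd (h1 hx1) (not_le.mpr h)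
      · exact Or.inl h
      · rcases lt_trichotomy x 2 with h' | h' | h'
        · exact absurd (h2 h) (not_le.mpr h')
        · exact Or.inr h'
        · exact absurd h3 (not_le.mpr h')
    · have hsub : (Ioo (-1 : ℝ) 0 ∪ Ioo 0 2 ∪ Ioi 2) ⊆ Ioi (-1) := by
        rintro x (( h | h) | h)
        · exact h.1
        · exact lt_trans (by norm_num) h.1
        · exact lt_trans (by norm_num : (-1:ℝ) < 2) h
      rw [diff_eq_empty.mpr hsub]
      exact measure_empty
  rw [setLIntegral_congr hae]
  have hd1 : Disjoint (Ioo (-1 : ℝ) 0 ∪ Ioo 0 2) (Ioi 2) := by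
    rw [Set.disjoint_left]
    rintro x (⟨h1, h2⟩ | ⟨h1, h2⟩) hx
    · have h3 : (2:ℝ) < x := hx; linarith
    · have h3 : (2:ℝ) < x := hx; linarith
  have hd2 : Disjoint (Ioo (-1 : ℝ) 0) (Ioo (0 : ℝ) 2) := by
    rw [Set.disjoint_left]
    rintro x ⟨h1, h2⟩ ⟨h3, h4⟩
    linarith
  rw [lintegral_union measurableSet_Ioi hd1, lintegral_union measurableSet_Ioo hd2]
  -- each branch equals the Ioi 3 lintegral
  have hb1 := branch_eq (measurableSet_Ioo)
    (fun x hx => ne_of_lt hx.2)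
    (fun x hx => by
      obtain ⟨h1, h2⟩ := hx
      nlinarith [mul_pos (show (0:ℝ) < x + 1 by linarith)
        (show (0:ℝ) < x ^ 2 - x + 1 by nlinarith [sq_nonneg (2 * x - 1)])])
    (fun x hx => by
      obtain ⟨h1, h2⟩ := hx
      have h3 : x ^ 3 < 0 := Odd.pow_neg (by decide) h2
      exact ne_of_lt (by linarith))
    mono1.injOn img1
  have hb2 := branch_eq (measurableSet_Ioo)
    (fun x hx => ne_of_gt hx.1)
    (fun x hx => by obtain ⟨h1, h2⟩ := hx; positivity)
    (fun x hx => by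
      obtain ⟨h1, h2⟩ := hx
      have := pow_lt_pow_left₀ h2 h1.le (by norm_num : 3 ≠ 0)
      norm_num at this
      exact ne_of_lt this)
    mono2.injOn img2
  have hb3 := branch_eq (measurableSet_Ioi)
    (fun x hx => by have : (2:ℝ) < x := hx; positivity)
    (fun x hx => by have : (2:ℝ) < x := hx; positivity)
    (fun x hx => by
      have h2 : (2:ℝ) < x := hx
      have := pow_lt_pow_left₀ h2 (by norm_num : (0:ℝ) ≤ 2) (by norm_num : 3 ≠ 0)
      norm_num at this
      exact ne_of_gt this)
    mono3.injOn img3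
  rw [← hb1, ← hb2, ← hb3, scale_eq]
  rw [← add_mul, ← add_mul, ← ENNReal.ofReal_add (by positivity) (by positivity),
    ← ENNReal.ofReal_add (by positivity) (by positivity)]
  rw [ENNReal.toReal_mul, ENNReal.toReal_ofReal (by positivity)]
  congr 1
  have h33 : Real.sqrt 3 * Real.sqrt 3 = 3 := Real.mul_self_sqrt (by norm_num)
  have hs3 : Real.sqrt 3 ≠ 0 := by positivity
  field_simp
  linarith [h33]
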